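/- arXiv:1808.05097 — 2 statements merged into one kernel-verified Lean document; each statement's English description precedes it below -/
import Mathlib

section
/- (Kruskal's Tree Theorem) The homeomorphic embedding relation is a well-quasi-ordering on the set of ground terms over a finite signature: for every infinite sequence of terms t₁, t₂, …, there exist indices i < j with tᵢ ◁ tⱼ. -/
/-- Terms over a signature `σ`: finite rooted trees labeled by function symbols. -/
inductive Tm (σ : Type) : Type
  | node : σ → List (Tm σ) → Tm σ

/-- Homeomorphic embedding: Diving and Coupling rules. -/
inductive Emb {σ : Type} : Tm σ → Tm σ → Prop
  | dive {s t : Tm σ} {f : σ} {ts : List (Tm σ)} : t ∈ ts → Emb s t → Emb s (.node f ts)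
  | couple {f : σ} {ss ts : List (Tm σ)} : List.Forall₂ Emb ss ts → Emb (.node f ss) (.node f ts)

/-- Well-formed terms w.r.t. an arity function: every `f`-node has exactly `ar f` arguments. -/
inductive WF {σ : Type} (ar : σ → Nat) : Tm σ → Prop
  | node {f : σ} {ts : List (Tm σ)} : ts.length = ar f → (∀ t ∈ ts, WF ar t) → WF ar (.node f ts)

namespace KruskalAux
variable {σ : Type}

theorem sizeOf_mem_lt {x : Tm σ} {f : σ} {ts : List (Tm σ)} (h : x ∈ ts) :
    sizeOf x < sizeOf (Tm.node f ts) := by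
  have h1 := List.sizeOf_lt_of_mem h
  have h2 : sizeOf (Tm.node f ts) = 1 + sizeOf f + sizeOf ts := by simp
  omega

theorem tm_ind {P : Tm σ → Prop}
    (h : ∀ f ts, (∀ x ∈ ts, P x) → P (Tm.node f ts)) : ∀ t, P t := by
  have key : ∀ n (t : Tm σ), sizeOf t ≤ n → P t := by
    intro n
    induction n with
    | zero =>
      rintro ⟨f, ts⟩ ht
      have : sizeOf (Tm.node f ts) = 1 + sizeOf f + sizeOf ts := by simp
      omega
    | succ n ih =>
      rintro ⟨f, ts⟩ _
      refine h f ts fun x hx => ih x ?_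
      have := sizeOf_mem_lt (f := f) hx
      omega
  exact fun t => key (sizeOf t) t le_rfl

theorem emb_refl : ∀ t : Tm σ, Emb t t := by
  apply tm_ind
  intro f ts ih
  exact Emb.couple (List.forall₂_same.2 ih)

instance : IsRefl (Tm σ) Emb := ⟨emb_refl⟩

theorem forall₂_mem_left {r : Tm σ → Tm σ → Prop} {l₁ l₂ : List (Tm σ)}
    (h : List.Forall₂ r l₁ l₂) {x} (hx : x ∈ l₁) : ∃ y ∈ l₂, r x y := by
  induction h with
  | nil => cases hx
  | cons hr h ih =>
    rcases List.mem_cons.1 hx with rfl | hx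
    · exact ⟨_, List.mem_cons_self, hr⟩
    · obtain ⟨y, hy, hry⟩ := ih hx
      exact ⟨y, List.mem_cons_of_mem _ hy, hry⟩

theorem forall₂_comp {ts us : List (Tm σ)} (h2 : List.Forall₂ Emb ts us)
    (H : ∀ y ∈ us, ∀ s t : Tm σ, Emb s t → Emb t y → Emb s y) :
    ∀ {ss}, List.Forall₂ Emb ss ts → List.Forall₂ Emb ss us := by
  induction h2 with
  | nil => intro ss h1; cases h1; exact .nil
  | cons hr h2 ih =>
    intro ss h1
    cases h1 with
    | cons hr' h1' =>
      exact .cons (H _ List.mem_cons_self _ _ hr' hr)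
        (ih (fun y hy => H y (List.mem_cons_of_mem _ hy)) h1')

theorem emb_trans {s t u : Tm σ} (h1 : Emb s t) (h2 : Emb t u) : Emb s u := by
  have key : ∀ n, ∀ u s t : Tm σ, sizeOf u ≤ n → Emb s t → Emb t u → Emb s u := by
    intro n
    induction n with
    | zero =>
      rintro ⟨f, ts⟩ s t ht
      have : sizeOf (Tm.node f ts) = 1 + sizeOf f + sizeOf ts := by simp
      omega
    | succ n ih =>
      intro u s t hu h1 h2
      cases h2 with
      | @dive _ y f us hmem h2' =>
        refine Emb.dive hmem (ih _ s t ?_ h1 h2')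
        have := sizeOf_mem_lt (f := f) hmem
        omega
      | @couple f ts' us h2' =>
        cases h1 with
        | @dive _ x _ _ hmem h1' =>
          obtain ⟨y, hy, hry⟩ := forall₂_mem_left h2' hmem
          refine Emb.dive hy (ih _ _ _ ?_ h1' hry)
          have := sizeOf_mem_lt (f := f) hy
          omega
        | @couple _ ss _ h1' =>
          refine Emb.couple (forall₂_comp h2' (fun y hy s' t' hs ht => ih y s' t' ?_ hs ht) h1')
          have := sizeOf_mem_lt (f := f) hy
          omega
  exact key (sizeOf u) u s t le_rfl h1 h2

instance : IsTrans (Tm σ) Emb := ⟨fun _ _ _ => emb_trans⟩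

instance : IsPreorder (Tm σ) Emb := {}

/-! ### label / arguments -/

def lbl : Tm σ → σ | .node f _ => f
def args : Tm σ → List (Tm σ) | .node _ ts => ts

theorem eta : ∀ t : Tm σ, t = .node (lbl t) (args t) | .node _ _ => rfl

theorem wf_args {ar : σ → Nat} {t : Tm σ} (h : WF ar t) : ∀ x ∈ args t, WF ar x := by
  cases h with | node h1 h2 => exact h2

theorem wf_len {ar : σ → Nat} {t : Tm σ} (h : WF ar t) : (args t).length = ar (lbl t) := by
  cases h with | node h1 h2 => exact h1

theorem emb_of_mem_args {s x t : Tm σ} (hx : x ∈ args t) (h : Emb s x) : Emb s t := by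
  cases t with
  | node f ts => exact Emb.dive hx h

/-! ### minimal bad sequences -/

variable (ar : σ → Nat)

/-- `l` is the initial segment of some bad sequence of well-formed terms. -/
def Ext (l : List (Tm σ)) : Prop :=
  ∃ s : ℕ → Tm σ, (∀ n, WF ar (s n)) ∧ (∀ i j, i < j → ¬ Emb (s i) (s j)) ∧
    ∀ i, (h : i < l.length) → s i = l[i]

theorem ext_step {l : List (Tm σ)} (h : Ext ar l) : ∃ x, Ext ar (l ++ [x]) := by
  obtain ⟨s, hwf, hbad, hpre⟩ := h
  refine ⟨s l.length, s, hwf, hbad, ?_⟩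
  intro i hi
  simp only [List.length_append, List.length_singleton] at hi
  rcases lt_or_ge i l.length with h' | h'
  · rw [List.getElem_append_left h']; exact hpre i h'
  · have hil : i = l.length := by omega
    subst hil
    rw [List.getElem_concat_length rfl]

open Classical in
noncomputable def pick [Inhabited (Tm σ)] (l : List (Tm σ)) : Tm σ :=
  if h : ∃ x, Ext ar (l ++ [x]) then
    (Nat.find_spec (show ∃ N, ∃ x : Tm σ, sizeOf x = N ∧ Ext ar (l ++ [x]) from
      let ⟨x, hx⟩ := h; ⟨sizeOf x, x, rfl, hx⟩)).choose
  else default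

open Classical in
theorem pick_spec [Inhabited (Tm σ)] {l : List (Tm σ)} (h : ∃ x, Ext ar (l ++ [x])) :
    Ext ar (l ++ [pick ar l]) ∧ ∀ y, Ext ar (l ++ [y]) → sizeOf (pick ar l) ≤ sizeOf y := by
  unfold pick
  rw [dif_pos h]
  set hN := (show ∃ N, ∃ x : Tm σ, sizeOf x = N ∧ Ext ar (l ++ [x]) from
      let ⟨x, hx⟩ := h; ⟨sizeOf x, x, rfl, hx⟩)
  obtain ⟨hsz, hext⟩ := (Nat.find_spec hN).choose_spec
  refine ⟨hext, fun y hy => ?_⟩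
  rw [hsz]
  exact Nat.find_min' hN ⟨y, rfl, hy⟩

noncomputable def pre [Inhabited (Tm σ)] : ℕ → List (Tm σ)
  | 0 => []
  | n + 1 => pre n ++ [pick ar (pre n)]

noncomputable def mseq [Inhabited (Tm σ)] (n : ℕ) : Tm σ := pick ar (pre ar n)

theorem pre_eq [Inhabited (Tm σ)] : ∀ n, pre ar n = (List.range n).map (mseq ar)
  | 0 => rfl
  | n + 1 => by
    rw [pre, pre_eq n, List.range_succ, List.map_append, List.map_singleton, mseq, pre_eq n]

theorem pre_length [Inhabited (Tm σ)] (n : ℕ) : (pre ar n).length = n := by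
  rw [pre_eq]; simp

theorem pre_getElem [Inhabited (Tm σ)] {n i : ℕ} (h : i < (pre ar n).length) :
    (pre ar n)[i] = mseq ar i := by
  have h' : i < n := by rwa [pre_length] at h
  simp [pre_eq, h']

theorem pre_ext [Inhabited (Tm σ)] (hb : Ext ar ([] : List (Tm σ))) : ∀ n, Ext ar (pre ar n)
  | 0 => hb
  | n + 1 => (pick_spec ar (ext_step ar (pre_ext hb n))).1

theorem mseq_min [Inhabited (Tm σ)] (n : ℕ) {y : Tm σ} (hy : Ext ar (pre ar n ++ [y])) :
    sizeOf (mseq ar n) ≤ sizeOf y :=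
  (pick_spec ar ⟨y, hy⟩).2 y hy

theorem mseq_ext [Inhabited (Tm σ)] (hb : Ext ar ([] : List (Tm σ))) (n : ℕ) : Ext ar (pre ar (n + 1)) := pre_ext ar hb (n + 1)

theorem mseq_wf [Inhabited (Tm σ)] (hb : Ext ar ([] : List (Tm σ))) (n : ℕ) : WF ar (mseq ar n) := by
  obtain ⟨s, hwf, hbad, hpre⟩ := mseq_ext ar hb n
  have hn : n < (pre ar (n + 1)).length := by rw [pre_length]; omega
  have := hpre n hn
  rw [pre_getElem] at this
  rw [← this]
  exact hwf n

theorem mseq_bad [Inhabited (Tm σ)] (hb : Ext ar ([] : List (Tm σ))) {i j : ℕ} (hij : i < j) : ¬ Emb (mseq ar i) (mseq ar j) := by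
  obtain ⟨s, hwf, hbad, hpre⟩ := mseq_ext ar hb j
  have hj : j < (pre ar (j + 1)).length := by rw [pre_length]; omega
  have hi : i < (pre ar (j + 1)).length := by rw [pre_length]; omega
  have e1 := hpre i hi; rw [pre_getElem] at e1
  have e2 := hpre j hj; rw [pre_getElem] at e2
  rw [← e1, ← e2]
  exact hbad i j hij

/-- The set of immediate subterms of the minimal bad sequence is pwo. -/
theorem children_pwo [Inhabited (Tm σ)] (hb : Ext ar ([] : List (Tm σ))) :
    {x : Tm σ | ∃ n, x ∈ args (mseq ar n)}.PartiallyWellOrderedOn Emb := by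
  classical
  rw [Set.partiallyWellOrderedOn_iff_exists_lt]
  intro u hu
  by_contra hcon
  push_neg at hcon
  choose nk hnk using hu
  -- pick k₀ with nk k₀ minimal
  have hPN : ∃ m, ∃ k, nk k = m := ⟨nk 0, 0, rfl⟩
  obtain ⟨k₀, hk₀⟩ := Nat.find_spec hPN
  have hmin : ∀ k, nk k₀ ≤ nk k := fun k => hk₀ ▸ Nat.find_min' hPN ⟨k, rfl⟩
  set N := nk k₀ with hN
  set w : ℕ → Tm σ := fun i => if i < N then mseq ar i else u (k₀ + (i - N)) with hw
  have wlt : ∀ i, i < N → w i = mseq ar i := by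
    intro i h; simp only [hw]; rw [if_pos h]
  have wge : ∀ i, N ≤ i → w i = u (k₀ + (i - N)) := by
    intro i h; simp only [hw]; rw [if_neg (by omega)]
  have hwwf : ∀ i, WF ar (w i) := by
    intro i
    rcases lt_or_ge i N with h | h
    · rw [wlt i h]; exact mseq_wf ar hb i
    · rw [wge i h]; exact wf_args (mseq_wf ar hb (nk (k₀ + (i - N)))) _ (hnk _)
  have hwbad : ∀ i j, i < j → ¬ Emb (w i) (w j) := by
    intro i j hij hemb
    rcases lt_or_ge j N with hjN | hjN
    · rw [wlt i (by omega), wlt j hjN] at hemb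
      exact mseq_bad ar hb hij hemb
    · rw [wge j hjN] at hemb
      rcases lt_or_ge i N with hiN | hiN
      · rw [wlt i hiN] at hemb
        have : Emb (mseq ar i) (mseq ar (nk (k₀ + (j - N)))) :=
          emb_of_mem_args (hnk _) hemb
        exact mseq_bad ar hb (lt_of_lt_of_le hiN (hN ▸ hmin _)) this
      · rw [wge i hiN] at hemb
        exact hcon (k₀ + (i - N)) (k₀ + (j - N)) (by omega) hemb
  have hwext : Ext ar (pre ar N ++ [u k₀]) := by
    refine ⟨w, hwwf, hwbad, ?_⟩
    intro i hi
    simp only [List.length_append, List.length_singleton, pre_length] at hi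
    rcases lt_or_ge i N with h' | h'
    · rw [List.getElem_append_left (by rwa [pre_length]), pre_getElem]
      exact wlt i h'
    · have hiN : i = N := by omega
      subst hiN
      rw [List.getElem_concat_length (pre_length ar N).symm]
      rw [wge N le_rfl]
      simp
  have h1 := mseq_min ar N hwext
  have h2 : sizeOf (u k₀) < sizeOf (mseq ar N) := by
    have := hnk k₀
    rw [← hN] at this
    calc sizeOf (u k₀) < sizeOf (Tm.node (lbl (mseq ar N)) (args (mseq ar N))) :=
          sizeOf_mem_lt this
      _ = sizeOf (mseq ar N) := by rw [← eta]
  omega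

end KruskalAux

open KruskalAux in
/-- Kruskal's Tree Theorem: homeomorphic embedding is a wqo on ground terms over a finite signature. -/
theorem kruskal_tree_theorem {σ : Type} [Fintype σ] (ar : σ → Nat)
    (t : ℕ → Tm σ) (hwf : ∀ n, WF ar (t n)) :
    ∃ i j, i < j ∧ Emb (t i) (t j) := by
  by_contra hcon
  push_neg at hcon
  haveI : Inhabited (Tm σ) := ⟨t 0⟩
  classical
  have hb : Ext ar ([] : List (Tm σ)) :=
    ⟨t, hwf, fun i j hij => hcon i j hij, fun i hi => by simp at hi⟩
  -- Higman's lemma on the children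
  have hS := children_pwo ar hb
  have hL := hS.partiallyWellOrderedOn_sublistForall₂ (r := Emb)
  -- pigeonhole on the labels
  obtain ⟨f₀, hf₀⟩ := Finite.exists_infinite_fiber (fun n => lbl (mseq ar n))
  set I : Set ℕ := (fun n => lbl (mseq ar n)) ⁻¹' {f₀} with hI
  haveI : Infinite I := hf₀
  set g := Nat.orderEmbeddingOfSet I with hg
  have hgI : ∀ n, g n ∈ I := by
    intro n
    have : g n ∈ Set.range g := ⟨n, rfl⟩
    rwa [Nat.orderEmbeddingOfSet_range] at this
  obtain ⟨i, j, hij, hsub⟩ := hL.exists_lt (f := fun k => args (mseq ar (g k)))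
    (fun k x hx => ⟨g k, hx⟩)
  -- equal lengths turn SublistForall₂ into Forall₂
  have hlen : ∀ k, (args (mseq ar (g k))).length = ar f₀ := by
    intro k
    rw [wf_len (mseq_wf ar hb (g k))]
    have := hgI k
    simp only [hI, Set.mem_preimage, Set.mem_singleton_iff] at this
    rw [this]
  have hfa : List.Forall₂ Emb (args (mseq ar (g i))) (args (mseq ar (g j))) := by
    rw [List.sublistForall₂_iff] at hsub
    obtain ⟨l, h1, h2⟩ := hsub
    have hle := h1.length_eq
    have : l = args (mseq ar (g j)) := h2.eq_of_length (by rw [← hle, hlen, hlen])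
    rwa [this] at h1
  have hlbi : lbl (mseq ar (g i)) = f₀ := hgI i
  have hlbj : lbl (mseq ar (g j)) = f₀ := hgI j
  have : Emb (mseq ar (g i)) (mseq ar (g j)) := by
    rw [eta (mseq ar (g i)), eta (mseq ar (g j)), hlbi, hlbj]
    exact Emb.couple hfa
  exact mseq_bad ar hb (g.lt_iff_lt.2 hij) this
end

section
/- Multiset embedding preserves well-quasi-orders: if ⊴ is a well-quasi-order on A, then the relation M ⊑ N on finite multisets over A, defined by the existence of an injection from M into N relating each element of M to its image by ⊴, is a well-quasi-order. -/
/-- Multiset embedding: `M ⊑ N` iff some sub-multiset of `N` is related to `M`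
    elementwise by `r` (an injective matching of `M` into `N` along `r`). -/
def msEmb {A : Type} (r : A → A → Prop) (M N : Multiset A) : Prop :=
  ∃ N' ≤ N, Multiset.Rel r M N'

/-- Multiset embedding preserves well-quasi-orders. -/
theorem msEmb_wqo {A : Type} (r : A → A → Prop)
    (hrefl : Reflexive r) (htrans : Transitive r)
    (hwqo : ∀ f : ℕ → A, ∃ i j, i < j ∧ r (f i) (f j)) :
    Reflexive (msEmb r) ∧ Transitive (msEmb r) ∧
      ∀ f : ℕ → Multiset A, ∃ i j, i < j ∧ msEmb r (f i) (f j) := by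
  haveI : IsRefl A r := ⟨hrefl⟩
  haveI : IsTrans A r := ⟨htrans⟩
  haveI : IsPreorder A r := {}
  have hrel_refl : ∀ M : Multiset A, Multiset.Rel r M M := by
    intro M
    induction M using Multiset.induction_on with
    | empty => exact Multiset.rel_zero_left.mpr rfl
    | cons a s ih => exact Multiset.Rel.cons (hrefl a) ih
  refine ⟨fun M => ⟨M, le_refl M, hrel_refl M⟩, ?_, ?_⟩
  · rintro M N P ⟨N', hN'le, hMN'⟩ ⟨P', hP'le, hNP'⟩
    obtain ⟨K, rfl⟩ := Multiset.le_iff_exists_add.mp hN'le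
    obtain ⟨P1, P2, h1, h2, rfl⟩ := Multiset.rel_add_left.mp hNP'
    exact ⟨P1, le_trans (Multiset.le_add_right _ _) hP'le,
      (hMN'.trans r) h1⟩
  · intro f
    have hs : (Set.univ : Set A).PartiallyWellOrderedOn r :=
      Set.partiallyWellOrderedOn_iff_exists_lt.mpr fun g _ => hwqo g
    have h := hs.partiallyWellOrderedOn_sublistForall₂ r
    obtain ⟨i, j, hij, hsl⟩ := h.exists_lt (f := fun n => (f n).toList) (fun n x _ => Set.mem_univ x)
    obtain ⟨l, hforall, hsub⟩ := List.sublistForall₂_iff.mp hsl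
    refine ⟨i, j, hij, ⟨(l : Multiset A), ?_, ?_⟩⟩
    · calc (l : Multiset A) ≤ ((f j).toList : Multiset A) := hsub.subperm
        _ = f j := Multiset.coe_toList _
    · have key : ∀ {l₁ l₂ : List A}, List.Forall₂ r l₁ l₂ →
          Multiset.Rel r (l₁ : Multiset A) (l₂ : Multiset A) := by
        intro l₁ l₂ h
        induction h with
        | nil => exact Multiset.rel_zero_left.mpr rfl
        | cons h _ ih => exact Multiset.Rel.cons h ih
      have : Multiset.Rel r ((f i).toList : Multiset A) (l : Multiset A) := key hforall
      rwa [Multiset.coe_toList] at this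
end
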